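/- For 0 ≤ s ≤ 1 let J_s = s |Φ_00⟩⟨Φ_00| + ((1−s)/4) I₄ be the Choi state of the qubit depolarising channel D^pol_s. Then for 0 ≤ s, s' ≤ 1: J_{s'} lies in the convex hull of { (U ⊗ V) J_s (U ⊗ V)† : U, V ∈ U(2) } (an allowed operation maps D^pol_s to D^pol_{s'}) if and only if s' ≤ s. -/

import Mathlib

open Matrix Kronecker

noncomputable section

/-- The qubit discrete Weyl operators `W_nm = Σ_c (−1)^{mc} |n+c⟩⟨c|`. -/
def Wq (n m : ZMod 2) : Matrix (ZMod 2) (ZMod 2) ℂ :=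
  Matrix.of fun r c => if r = n + c then (-1 : ℂ) ^ (m.val * c.val) else 0

/-- The qubit Bell basis vector `|Φ_nm⟩ = (I ⊗ W_nm)|Φ_00⟩`. -/
def bell (n m : ZMod 2) : ZMod 2 × ZMod 2 → ℂ :=
  fun p => ((Real.sqrt 2 : ℝ) : ℂ)⁻¹ * Wq n m p.2 p.1

/-- The Bell projector `|Φ_nm⟩⟨Φ_nm|`. -/
def bellProj (n m : ZMod 2) : Matrix (ZMod 2 × ZMod 2) (ZMod 2 × ZMod 2) ℂ :=
  Matrix.of fun p q => bell n m p * (starRingEnd ℂ) (bell n m q)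

/-- The set `{ (U ⊗ V) J (U ⊗ V)† : U, V ∈ U(2) }`. -/
def allowedSet (J : Matrix (ZMod 2 × ZMod 2) (ZMod 2 × ZMod 2) ℂ) :
    Set (Matrix (ZMod 2 × ZMod 2) (ZMod 2 × ZMod 2) ℂ) :=
  { K | ∃ U ∈ Matrix.unitaryGroup (ZMod 2) ℂ, ∃ V ∈ Matrix.unitaryGroup (ZMod 2) ℂ,
      K = (U ⊗ₖ V) * J * (U ⊗ₖ V)ᴴ }

/-- The Choi state `J_s = s |Φ_00⟩⟨Φ_00| + ((1−s)/4) I₄` of the qubit depolarising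
channel `D^pol_s`. -/
def Jdep (s : ℝ) : Matrix (ZMod 2 × ZMod 2) (ZMod 2 × ZMod 2) ℂ :=
  s • bellProj 0 0 + ((1 - s) / 4) • (1 : Matrix (ZMod 2 × ZMod 2) (ZMod 2 × ZMod 2) ℂ)

/-- The Choi state `K_q = ((1+q)/2)|Φ_00⟩⟨Φ_00| + ((1−q)/2)|Φ_01⟩⟨Φ_01|` of the qubit
dephasing channel `D^ph_q`. -/
def Kdeph (q : ℝ) : Matrix (ZMod 2 × ZMod 2) (ZMod 2 × ZMod 2) ℂ :=
  ((1 + q) / 2) • bellProj 0 0 + ((1 - q) / 2) • bellProj 0 1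

/-! ### Auxiliary lemmas -/

theorem zsum (f : ZMod 2 → ℂ) : ∑ x, f x = f 0 + f 1 := by
  rw [show (Finset.univ : Finset (ZMod 2)) = {0,1} by decide]; simp

theorem zcases (a : ZMod 2) : a = 0 ∨ a = 1 := by revert a; decide

theorem c2 : (((Real.sqrt 2 : ℝ) : ℂ))⁻¹ * (((Real.sqrt 2 : ℝ) : ℂ))⁻¹ = (2 : ℂ)⁻¹ := by
  rw [← mul_inv, ← Complex.ofReal_mul, Real.mul_self_sqrt (by norm_num)]; norm_num

theorem Wq_conjT_mul (n m : ZMod 2) : (Wq n m)ᴴ * Wq n m = 1 := by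
  ext i j
  simp only [mul_apply, conjTranspose_apply, Wq, of_apply, one_apply]
  rw [Finset.sum_congr rfl (fun r _ =>
    show star (if r = n + i then (-1:ℂ) ^ (m.val * i.val) else 0) *
      (if r = n + j then (-1:ℂ) ^ (m.val * j.val) else 0)
      = if r = n + i then (if r = n + j then ((-1:ℂ) ^ (m.val * i.val)) * (-1:ℂ) ^ (m.val * j.val) else 0) else 0
    by split <;> split <;> simp [← map_pow])]
  rw [Finset.sum_ite_eq' Finset.univ (n + i)]
  simp only [Finset.mem_univ, if_true]
  by_cases h : i = j
  · subst h
    simp [← pow_add, (Even.add_self _).neg_one_pow]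
  · have : ¬ (n + i = n + j) := fun hc => h (by
      have := congrArg (fun x => x - n) hc; simpa using this)
    simp [this, h]

theorem Wq_mem (n m : ZMod 2) : Wq n m ∈ Matrix.unitaryGroup (ZMod 2) ℂ := by
  rw [Matrix.mem_unitaryGroup_iff]
  exact mul_eq_one_comm.mpr (Wq_conjT_mul n m)

theorem kron_conjT (U V : Matrix (ZMod 2) (ZMod 2) ℂ) :
    (U ⊗ₖ V)ᴴ = Uᴴ ⊗ₖ Vᴴ := by
  ext ⟨i,j⟩ ⟨k,l⟩
  simp [conjTranspose_apply, kroneckerMap_apply, star_mul']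

theorem kron_mem {U V : Matrix (ZMod 2) (ZMod 2) ℂ}
    (hU : U ∈ Matrix.unitaryGroup (ZMod 2) ℂ) (hV : V ∈ Matrix.unitaryGroup (ZMod 2) ℂ) :
    (U ⊗ₖ V) ∈ Matrix.unitaryGroup (ZMod 2 × ZMod 2) ℂ := by
  rw [Matrix.mem_unitaryGroup_iff]
  have h : (star (U ⊗ₖ V) : Matrix _ _ ℂ) = Uᴴ ⊗ₖ Vᴴ := kron_conjT U V
  rw [Matrix.mem_unitaryGroup_iff] at hU hV
  rw [h, ← Matrix.mul_kronecker_mul, show U * Uᴴ = 1 from hU, show V * Vᴴ = 1 from hV,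
    Matrix.one_kronecker_one]

theorem conj_rankOne (M : Matrix (ZMod 2 × ZMod 2) (ZMod 2 × ZMod 2) ℂ)
    (f : ZMod 2 × ZMod 2 → ℂ) :
    M * (Matrix.of fun p q => f p * (starRingEnd ℂ) (f q)) * Mᴴ =
      Matrix.of fun p q => (M *ᵥ f) p * (starRingEnd ℂ) ((M *ᵥ f) q) := by
  ext p q
  simp only [mul_apply, conjTranspose_apply, of_apply, mulVec, dotProduct, map_sum, _root_.map_mul,
    Finset.sum_mul, Finset.mul_sum]
  exact Finset.sum_congr rfl fun t _ => Finset.sum_congr rfl fun r _ => by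
    simp only [Complex.star_def]; ring

theorem kron_mulVec_bell (n m : ZMod 2) :
    (1 ⊗ₖ Wq n m) *ᵥ bell 0 0 = bell n m := by
  ext ⟨a, b⟩
  simp only [mulVec, dotProduct, Fintype.sum_prod_type, kroneckerMap_apply, one_apply]
  rw [zsum]
  simp only [ite_mul, one_mul, zero_mul, if_pos rfl, zsum]
  rcases zcases a with rfl | rfl <;> rcases zcases b with rfl | rfl <;>
    rcases zcases n with rfl | rfl <;> rcases zcases m with rfl | rfl <;>
      simp [bell, Wq, Prod.ext_iff, ZMod.val_one, show (2:ZMod 2) = 0 by decide]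

theorem sum_bellProj : ∑ p : ZMod 2 × ZMod 2, bellProj p.1 p.2 = 1 := by
  ext ⟨a, b⟩ ⟨a', b'⟩
  simp only [Matrix.sum_apply, Fintype.sum_prod_type, bellProj, of_apply, bell, Wq, one_apply,
    _root_.map_mul, map_inv₀, Complex.conj_ofReal]
  rw [zsum]
  simp only [zsum]
  rcases zcases a with rfl | rfl <;> rcases zcases b with rfl | rfl <;>
    rcases zcases a' with rfl | rfl <;> rcases zcases b' with rfl | rfl <;>
      simp [Prod.ext_iff, ZMod.val_one, pow_two, show (2:ZMod 2) = 0 by decide,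
        show (1:ZMod 2) + 1 = 0 by decide, apply_ite (starRingEnd ℂ)] <;>
      norm_num [pow_two, c2, ZMod.val_one, show (0:ZMod 2) = 2 by decide]

theorem quad (f w : ZMod 2 × ZMod 2 → ℂ) :
    star w ⬝ᵥ ((Matrix.of fun p q => f p * (starRingEnd ℂ) (f q)) *ᵥ w)
      = (starRingEnd ℂ) (star f ⬝ᵥ w) * (star f ⬝ᵥ w) := by
  simp only [mulVec, dotProduct, Pi.star_apply, map_sum, _root_.map_mul, of_apply,
    Finset.sum_mul, Finset.mul_sum, Complex.star_def, RingHomCompTriple.comp_apply,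
    starRingEnd_self_apply, RingHom.id_apply]
  rw [Finset.sum_comm]
  exact Finset.sum_congr rfl fun p _ => Finset.sum_congr rfl fun q _ => by ring

theorem hvv : star (bell 0 0) ⬝ᵥ bell 0 0 = 1 := by
  simp only [dotProduct, Fintype.sum_prod_type, Pi.star_apply, bell, Wq, of_apply,
    Complex.star_def, _root_.map_mul, map_inv₀, Complex.conj_ofReal]
  rw [zsum]
  simp only [zsum]
  norm_num [show (1:ZMod 2) ≠ 0 by decide, c2, apply_ite (starRingEnd ℂ)]

theorem conj_Jdep (s : ℝ) (n m : ZMod 2) :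
    (1 ⊗ₖ Wq n m) * Jdep s * (1 ⊗ₖ Wq n m)ᴴ
      = s • bellProj n m + ((1 - s) / 4) • (1 : Matrix (ZMod 2 × ZMod 2) (ZMod 2 × ZMod 2) ℂ) := by
  have hu : ((1 : Matrix (ZMod 2) (ZMod 2) ℂ) ⊗ₖ Wq n m) * ((1 : Matrix (ZMod 2) (ZMod 2) ℂ) ⊗ₖ Wq n m)ᴴ
      = (1 : Matrix (ZMod 2 × ZMod 2) (ZMod 2 × ZMod 2) ℂ) := by
    rw [← Matrix.star_eq_conjTranspose]
    exact Matrix.mem_unitaryGroup_iff.mp (kron_mem (one_mem _) (Wq_mem n m))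
  have h1 : (1 ⊗ₖ Wq n m) * bellProj 0 0 * (1 ⊗ₖ Wq n m)ᴴ = bellProj n m := by
    rw [show bellProj 0 0 = Matrix.of fun p q => bell 0 0 p * (starRingEnd ℂ) (bell 0 0 q) from rfl,
      conj_rankOne, kron_mulVec_bell]
    rfl
  unfold Jdep
  rw [Matrix.mul_add, Matrix.add_mul, Matrix.mul_smul, Matrix.smul_mul, h1,
    Matrix.mul_smul, Matrix.smul_mul, Matrix.mul_one, hu]

/-- An allowed operation maps the qubit depolarising channel `D^pol_s` to
`D^pol_{s'}` if and only if `s' ≤ s`. -/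
theorem depolarising_to_depolarising (s s' : ℝ)
    (hs0 : 0 ≤ s) (hs1 : s ≤ 1) (hs'0 : 0 ≤ s') (hs'1 : s' ≤ 1) :
    Jdep s' ∈ convexHull ℝ (allowedSet (Jdep s)) ↔ s' ≤ s := by
  constructor
  · intro hmem
    set v := bell 0 0 with hv
    set L : Matrix (ZMod 2 × ZMod 2) (ZMod 2 × ZMod 2) ℂ → ℝ :=
      fun K => (star v ⬝ᵥ (K *ᵥ v)).re with hL
    have hlin : IsLinearMap ℝ L := by
      constructor
      · intro A B
        simp [hL, Matrix.add_mulVec, dotProduct_add]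
      · intro r A
        simp [hL, Matrix.smul_mulVec, dotProduct_smul, Complex.smul_re]
    -- value on Jdep t
    have hval : ∀ t : ℝ, L (Jdep t) = t + (1 - t)/4 := by
      intro t
      have hq : star v ⬝ᵥ (bellProj 0 0 *ᵥ v)
          = (starRingEnd ℂ) (star v ⬝ᵥ v) * (star v ⬝ᵥ v) := quad v v
      have hvv' : star v ⬝ᵥ v = 1 := hvv
      simp only [hL, Jdep, Matrix.add_mulVec, Matrix.smul_mulVec, Matrix.one_mulVec,
        dotProduct_add, dotProduct_smul, hq, hvv']
      norm_num [Complex.smul_re]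
    -- bound on the allowed set
    have hbound : ∀ K ∈ allowedSet (Jdep s), L K ≤ s + (1 - s)/4 := by
      rintro K ⟨U, hU, V, hV, rfl⟩
      set M := U ⊗ₖ V with hM
      have hMu := kron_mem hU hV
      have hM1 : M * Mᴴ = 1 := by
        rw [← Matrix.star_eq_conjTranspose]
        exact Matrix.mem_unitaryGroup_iff.mp hMu
      set w := Mᴴ *ᵥ v with hwdef
      have hw : star w = star v ᵥ* M := by
        rw [hwdef, Matrix.star_mulVec, Matrix.conjTranspose_conjTranspose]
      have hvv' : star v ⬝ᵥ v = 1 := hvv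
      have key : star v ⬝ᵥ ((M * Jdep s * Mᴴ) *ᵥ v) = star w ⬝ᵥ (Jdep s *ᵥ w) :=
        calc star v ⬝ᵥ ((M * Jdep s * Mᴴ) *ᵥ v)
            = star v ⬝ᵥ (M *ᵥ ((Jdep s * Mᴴ) *ᵥ v)) := by
              rw [Matrix.mulVec_mulVec, Matrix.mul_assoc]
          _ = (star v ᵥ* M) ⬝ᵥ ((Jdep s * Mᴴ) *ᵥ v) := Matrix.dotProduct_mulVec _ _ _
          _ = star w ⬝ᵥ (Jdep s *ᵥ w) := by
              rw [← hw, ← Matrix.mulVec_mulVec, ← hwdef]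
      have hww : star w ⬝ᵥ w = 1 :=
        calc star w ⬝ᵥ w
            = (star v ᵥ* M) ⬝ᵥ (Mᴴ *ᵥ v) := by rw [← hw, ← hwdef]
          _ = star v ⬝ᵥ (M *ᵥ (Mᴴ *ᵥ v)) := (Matrix.dotProduct_mulVec _ _ _).symm
          _ = star v ⬝ᵥ ((M * Mᴴ) *ᵥ v) := by rw [Matrix.mulVec_mulVec]
          _ = 1 := by rw [hM1, Matrix.one_mulVec, hvv']
      set zc := star v ⬝ᵥ w with hzc
      have hq : star w ⬝ᵥ (bellProj 0 0 *ᵥ w) = (starRingEnd ℂ) zc * zc := quad v w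
      -- Cauchy–Schwarz
      have hcs : Complex.normSq zc ≤ 1 := by
        set x : EuclideanSpace ℂ (ZMod 2 × ZMod 2) := (WithLp.equiv 2 _).symm v with hx
        set y : EuclideanSpace ℂ (ZMod 2 × ZMod 2) := (WithLp.equiv 2 _).symm w with hy
        have hin : @inner ℂ _ _ x y = zc := (EuclideanSpace.inner_toLp_toLp v w).trans (dotProduct_comm _ _)
        have hxx : @inner ℂ _ _ x x = 1 := by
          exact (EuclideanSpace.inner_toLp_toLp v v).trans ((dotProduct_comm _ _).trans hvv)
        have hyy : @inner ℂ _ _ y y = 1 := by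
          exact (EuclideanSpace.inner_toLp_toLp w w).trans ((dotProduct_comm _ _).trans hww)
        have hnx : ‖x‖ = 1 := by
          have h3 : ‖x‖ * ‖x‖ = 1 := by
            rw [← inner_self_eq_norm_mul_norm (𝕜 := ℂ), hxx]; simp
          rw [← Real.sqrt_mul_self (norm_nonneg x), h3, Real.sqrt_one]
        have hny : ‖y‖ = 1 := by
          have h3 : ‖y‖ * ‖y‖ = 1 := by
            rw [← inner_self_eq_norm_mul_norm (𝕜 := ℂ), hyy]; simp
          rw [← Real.sqrt_mul_self (norm_nonneg y), h3, Real.sqrt_one]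
        have hb : ‖zc‖ ≤ 1 := by
          have := norm_inner_le_norm (𝕜 := ℂ) x y
          rwa [hin, hnx, hny, one_mul] at this
        calc Complex.normSq zc = ‖zc‖^2 := by
              rw [Complex.normSq_eq_norm_sq]
          _ ≤ 1 := by nlinarith [norm_nonneg zc]
      have hcompute : L (M * Jdep s * Mᴴ) = s * Complex.normSq zc + (1 - s)/4 := by
        show (star v ⬝ᵥ ((M * Jdep s * Mᴴ) *ᵥ v)).re = _
        rw [key]
        simp only [Jdep, Matrix.add_mulVec, Matrix.smul_mulVec,
          Matrix.one_mulVec, dotProduct_add, dotProduct_smul, hq, hww]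
        rw [show (starRingEnd ℂ) zc * zc = (Complex.normSq zc : ℂ) by
          rw [mul_comm, Complex.mul_conj]]
        norm_num [Complex.smul_re]
      rw [hcompute]
      nlinarith
    have hhalf : Jdep s' ∈ {K : Matrix (ZMod 2 × ZMod 2) (ZMod 2 × ZMod 2) ℂ |
        L K ≤ s + (1 - s)/4} :=
      convexHull_min hbound (convex_halfSpace_le hlin _) hmem
    have := hval s'
    have h2 : L (Jdep s') ≤ s + (1 - s)/4 := hhalf
    linarith [this ▸ h2]
  · intro hle
    by_cases hs : s = 0
    · have hs' : s' = 0 := le_antisymm (hs ▸ hle) hs'0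
      subst hs; subst hs'
      refine subset_convexHull ℝ _ ⟨1, one_mem _, 1, one_mem _, ?_⟩
      rw [Matrix.one_kronecker_one, Matrix.conjTranspose_one, one_mul, mul_one]
    · have hspos : 0 < s := lt_of_le_of_ne hs0 (Ne.symm hs)
      set t := s'/s with htdef
      have ht0 : 0 ≤ t := div_nonneg hs'0 hs0
      have ht1 : t ≤ 1 := (div_le_one hspos).mpr hle
      set z : ZMod 2 × ZMod 2 → Matrix (ZMod 2 × ZMod 2) (ZMod 2 × ZMod 2) ℂ :=
        fun p => (1 ⊗ₖ Wq p.1 p.2) * Jdep s * (1 ⊗ₖ Wq p.1 p.2)ᴴ with hz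
      have hzmem : ∀ p, z p ∈ allowedSet (Jdep s) :=
        fun p => ⟨1, one_mem _, Wq p.1 p.2, Wq_mem _ _, rfl⟩
      have hzsum : ∑ p : ZMod 2 × ZMod 2, z p = (1 : Matrix (ZMod 2 × ZMod 2) (ZMod 2 × ZMod 2) ℂ) := by
        simp only [hz, conj_Jdep]
        rw [Finset.sum_add_distrib, ← Finset.smul_sum, sum_bellProj, Finset.sum_const,
          Finset.card_univ, show Fintype.card (ZMod 2 × ZMod 2) = 4 by simp,
          ← Nat.cast_smul_eq_nsmul ℝ 4, smul_smul, ← add_smul]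
        rw [show s + ((4:ℕ):ℝ) * ((1 - s)/4) = 1 by push_cast; ring, one_smul]
      have hbar : Finset.univ.centerMass (fun _ : ZMod 2 × ZMod 2 => (1:ℝ)) z
          = (4:ℝ)⁻¹ • (1 : Matrix (ZMod 2 × ZMod 2) (ZMod 2 × ZMod 2) ℂ) := by
        rw [Finset.centerMass]
        simp only [one_smul, Finset.sum_const, Finset.card_univ, nsmul_eq_mul, mul_one]
        rw [hzsum, show Fintype.card (ZMod 2 × ZMod 2) = 4 by simp]
        norm_num
      have hbarmem : (4:ℝ)⁻¹ • (1 : Matrix (ZMod 2 × ZMod 2) (ZMod 2 × ZMod 2) ℂ)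
          ∈ convexHull ℝ (allowedSet (Jdep s)) := by
        rw [← hbar]
        exact Finset.centerMass_mem_convexHull _ (fun i _ => zero_le_one)
          (by simp) (fun i _ => hzmem i)
      have hJ : Jdep s' = t • Jdep s + (1 - t) • ((4:ℝ)⁻¹ • (1 : Matrix (ZMod 2 × ZMod 2) (ZMod 2 × ZMod 2) ℂ)) := by
        unfold Jdep
        match_scalars <;> rw [htdef] <;> field_simp <;> try ring
      have hJmem : Jdep s ∈ allowedSet (Jdep s) := by
        refine ⟨1, one_mem _, 1, one_mem _, ?_⟩
        rw [Matrix.one_kronecker_one, Matrix.conjTranspose_one, one_mul, mul_one]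
      have hJmem' : Jdep s ∈ convexHull ℝ (allowedSet (Jdep s)) :=
        subset_convexHull ℝ _ hJmem
      have h1t : (0:ℝ) ≤ 1 - t := by linarith
      have hsum1 : t + (1 - t) = 1 := by ring
      rw [hJ]
      exact (convex_convexHull ℝ (allowedSet (Jdep s))) hJmem' hbarmem ht0 h1t hsum1

end
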